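/- Let K : M(Ω) → H be a bounded linear operator from Radon measures on a compact set Ω to a Hilbert space H, such that y ↦ ‖Kδ_y‖_H is continuous, and suppose z ∈ Ω maximizes f(y) := ‖Kδ_y‖_H with f(z) > 0. Then μ₀ = c·δ_z with c = 1/‖Kδ_z‖_H satisfies: for all μ ∈ M(Ω), ‖Kμ‖_H ≤ J(μ)·‖Kδ_z‖_H, with equality for μ = μ₀; i.e., μ₀ is a ground state of J(μ) = |μ|(Ω) (the total variation norm) subject to ‖Kμ‖_H = 1, and the smallest singular value is λ₀ = c. -/

import Mathlib

open MeasureTheory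
open scoped RealInnerProductSpace

lemma toJordanDecomposition_measure_toSignedMeasure {Ω : Type*} [MeasurableSpace Ω]
    (ν : Measure Ω) [IsFiniteMeasure ν] :
    ν.toSignedMeasure.toJordanDecomposition =
      ⟨ν, 0, Measure.MutuallySingular.zero_right⟩ := by
  apply SignedMeasure.toJordanDecomposition_eq
  show ν.toSignedMeasure = ν.toSignedMeasure - (0 : Measure Ω).toSignedMeasure
  rw [Measure.toSignedMeasure_zero, sub_zero]

theorem support_pursuit_ground_state
    {Ω : Type*} [TopologicalSpace Ω] [CompactSpace Ω] [MeasurableSpace Ω]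
    [OpensMeasurableSpace Ω]
    {H : Type*} [NormedAddCommGroup H] [InnerProductSpace ℝ H]
    (K : SignedMeasure Ω →ₗ[ℝ] H)
    (hrep : ∀ (μ : SignedMeasure Ω) (w : H),
      ⟪w, K μ⟫ =
        (∫ y, (⟪w, K (Measure.dirac y).toSignedMeasure⟫ : ℝ)
            ∂μ.toJordanDecomposition.posPart) -
        (∫ y, (⟪w, K (Measure.dirac y).toSignedMeasure⟫ : ℝ)
            ∂μ.toJordanDecomposition.negPart))
    (hcont : Continuous fun y : Ω => ‖K (Measure.dirac y).toSignedMeasure‖)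
    (z : Ω) (hz : ∀ y : Ω, ‖K (Measure.dirac y).toSignedMeasure‖ ≤
      ‖K (Measure.dirac z).toSignedMeasure‖)
    (hzpos : 0 < ‖K (Measure.dirac z).toSignedMeasure‖) :
    let c : ℝ := 1 / ‖K (Measure.dirac z).toSignedMeasure‖
    let μ₀ : SignedMeasure Ω := c • (Measure.dirac z).toSignedMeasure
    (∀ μ : SignedMeasure Ω,
      ‖K μ‖ ≤ (μ.totalVariation Set.univ).toReal * ‖K (Measure.dirac z).toSignedMeasure‖) ∧
    ‖K μ₀‖ = (μ₀.totalVariation Set.univ).toReal * ‖K (Measure.dirac z).toSignedMeasure‖ ∧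
    ‖K μ₀‖ = 1 ∧
    (μ₀.totalVariation Set.univ).toReal = c := by
  intro c μ₀
  set fz : ℝ := ‖K (Measure.dirac z).toSignedMeasure‖ with hfz
  have hc : 0 < c := by positivity
  -- total variation of μ₀
  have hjd : μ₀.toJordanDecomposition =
      c • (⟨Measure.dirac z, 0, Measure.MutuallySingular.zero_right⟩ :
        JordanDecomposition Ω) := by
    rw [show μ₀ = c • (Measure.dirac z).toSignedMeasure from rfl,
      SignedMeasure.toJordanDecomposition_smul_real,
      toJordanDecomposition_measure_toSignedMeasure]
  have hpos : μ₀.toJordanDecomposition.posPart = c.toNNReal • Measure.dirac z := by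
    rw [hjd, JordanDecomposition.real_smul_posPart_nonneg _ _ hc.le]
  have hneg : μ₀.toJordanDecomposition.negPart = 0 := by
    rw [hjd, JordanDecomposition.real_smul_negPart_nonneg _ _ hc.le]
    simp
  have htv : (μ₀.totalVariation Set.univ).toReal = c := by
    rw [SignedMeasure.totalVariation, Measure.add_apply, hpos, hneg]
    rw [Measure.smul_apply, measure_univ, Measure.coe_zero, Pi.zero_apply, add_zero,
      ENNReal.smul_def, smul_eq_mul, mul_one, ENNReal.coe_toReal, Real.coe_toNNReal _ hc.le]
  -- the key inequality
  have key : ∀ μ : SignedMeasure Ω, ‖K μ‖ ≤ (μ.totalVariation Set.univ).toReal * fz := by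
    intro μ
    rcases eq_or_lt_of_le (norm_nonneg (K μ)) with h0 | h0
    · rw [← h0]
      positivity
    · have hb : ∀ y : Ω, ‖(⟪K μ, K (Measure.dirac y).toSignedMeasure⟫ : ℝ)‖ ≤ ‖K μ‖ * fz := by
        intro y
        calc ‖(⟪K μ, K (Measure.dirac y).toSignedMeasure⟫ : ℝ)‖
            ≤ ‖K μ‖ * ‖K (Measure.dirac y).toSignedMeasure‖ := by
              rw [Real.norm_eq_abs]; exact abs_real_inner_le_norm _ _
          _ ≤ ‖K μ‖ * fz := by
              exact mul_le_mul_of_nonneg_left (hz y) (norm_nonneg _)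
      have hIp : ‖∫ y, (⟪K μ, K (Measure.dirac y).toSignedMeasure⟫ : ℝ)
          ∂μ.toJordanDecomposition.posPart‖ ≤
          ‖K μ‖ * fz * (μ.toJordanDecomposition.posPart Set.univ).toReal :=
        norm_integral_le_of_norm_le_const (Filter.Eventually.of_forall hb)
      have hIn : ‖∫ y, (⟪K μ, K (Measure.dirac y).toSignedMeasure⟫ : ℝ)
          ∂μ.toJordanDecomposition.negPart‖ ≤
          ‖K μ‖ * fz * (μ.toJordanDecomposition.negPart Set.univ).toReal :=
        norm_integral_le_of_norm_le_const (Filter.Eventually.of_forall hb)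
      have hsq : ‖K μ‖ ^ 2 = ⟪K μ, K μ⟫ := (real_inner_self_eq_norm_sq _).symm
      have htv' : (μ.totalVariation Set.univ).toReal =
          (μ.toJordanDecomposition.posPart Set.univ).toReal +
          (μ.toJordanDecomposition.negPart Set.univ).toReal := by
        rw [SignedMeasure.totalVariation, Measure.add_apply,
          ENNReal.toReal_add (measure_ne_top _ _) (measure_ne_top _ _)]
      have : ‖K μ‖ ^ 2 ≤ ‖K μ‖ * ((μ.totalVariation Set.univ).toReal * fz) := by
        rw [hsq, hrep μ (K μ), htv']
        calc (∫ y, (⟪K μ, K (Measure.dirac y).toSignedMeasure⟫ : ℝ)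
                ∂μ.toJordanDecomposition.posPart) -
              (∫ y, (⟪K μ, K (Measure.dirac y).toSignedMeasure⟫ : ℝ)
                ∂μ.toJordanDecomposition.negPart)
            ≤ ‖K μ‖ * fz * (μ.toJordanDecomposition.posPart Set.univ).toReal +
              ‖K μ‖ * fz * (μ.toJordanDecomposition.negPart Set.univ).toReal := by
              rw [Real.norm_eq_abs] at hIp hIn
              have h1 := (le_abs_self _).trans hIp
              have h2 := (neg_le_abs _).trans hIn
              linarith
          _ = ‖K μ‖ * (((μ.toJordanDecomposition.posPart Set.univ).toReal +
              (μ.toJordanDecomposition.negPart Set.univ).toReal) * fz) := by ring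
      nlinarith [this, sq_nonneg (‖K μ‖)]
  have hKμ₀ : ‖K μ₀‖ = 1 := by
    have : K μ₀ = c • K (Measure.dirac z).toSignedMeasure := map_smul K c _
    rw [this, norm_smul, Real.norm_eq_abs, abs_of_pos hc]
    show (1 / fz) * fz = 1
    field_simp
  refine ⟨key, ?_, hKμ₀, htv⟩
  rw [hKμ₀, htv]
  show (1 : ℝ) = (1 / fz) * fz
  field_simp
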